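/- Let x and y be real numbers with x + y + k ≠ 0 for every natural number k, and define s(x,y) = ∑_{n=0}^∞ (−1)^n (x)_n² / ((x+y)_n)². Assume all the series appearing below converge (are summable). Then both of the following hold: (i) s(x,y) = 1 − x²/(x+y)² · s(x+1,y); (ii) s(x,y) = (2x² + 6xy + 5y² + y) / (4(x+y)²) − y(y+1)³ / (4(x+y)²(x+y+1)²) · s(x,y+2). -/
import Mathlib


/-- The rising factorial (Pochhammer symbol) `(a)_n = a (a+1) ⋯ (a+n-1)`. -/
noncomputable def poch (a : ℝ) (n : ℕ) : ℝ := ∏ i ∈ Finset.range n, (a + i)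

/-- `s(x,y) = ∑_{n=0}^∞ (−1)ⁿ (x)_n² / ((x+y)_n)²`. -/
noncomputable def s (x y : ℝ) : ℝ :=
  ∑' n : ℕ, (-1 : ℝ) ^ n * (poch x n) ^ 2 / (poch (x + y) n) ^ 2

lemma poch_zero' (a : ℝ) : poch a 0 = 1 := by simp [poch]

lemma poch_succ (a : ℝ) (n : ℕ) : poch a (n+1) = poch a n * (a + n) :=
  Finset.prod_range_succ _ _

lemma poch_succ' (a : ℝ) (n : ℕ) : poch a (n+1) = a * poch (a+1) n := by
  unfold poch
  rw [Finset.prod_range_succ']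
  rw [mul_comm]
  simp only [Nat.cast_zero, add_zero]
  congr 1
  refine Finset.prod_congr rfl fun i _ => ?_
  push_cast
  ring

set_option maxHeartbeats 800000 in
/-- The two ₃F₂(−1) recurrences of Theorem 6. -/
theorem stmt_14 (x y : ℝ) (hxy : ∀ k : ℕ, x + y + k ≠ 0)
    (h1 : Summable fun n : ℕ => (-1 : ℝ) ^ n * (poch x n) ^ 2 / (poch (x + y) n) ^ 2)
    (h2 : Summable fun n : ℕ =>
      (-1 : ℝ) ^ n * (poch (x + 1) n) ^ 2 / (poch (x + 1 + y) n) ^ 2)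
    (h3 : Summable fun n : ℕ =>
      (-1 : ℝ) ^ n * (poch x n) ^ 2 / (poch (x + (y + 2)) n) ^ 2) :
    s x y = 1 - x ^ 2 / (x + y) ^ 2 * s (x + 1) y
      ∧ s x y = (2 * x ^ 2 + 6 * x * y + 5 * y ^ 2 + y) / (4 * (x + y) ^ 2)
          - y * (y + 1) ^ 3 / (4 * (x + y) ^ 2 * (x + y + 1) ^ 2) * s x (y + 2) := by
  have hP : ∀ n : ℕ, poch (x+y) n ≠ 0 := by
    intro n
    unfold poch
    exact Finset.prod_ne_zero_iff.2 fun i _ => hxy i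
  have hxy0 : x + y ≠ 0 := by simpa using hxy 0
  have hxy1 : x + y + 1 ≠ 0 := by have := hxy 1; push_cast at this; exact this
  -- the term of `s x y`
  set t : ℕ → ℝ := fun n => (-1 : ℝ) ^ n * (poch x n) ^ 2 / (poch (x + y) n) ^ 2 with ht
  have hPs : ∀ n : ℕ, poch (x+y+1) n ≠ 0 := by
    intro n
    have h := hP (n+1)
    rw [poch_succ'] at h
    exact right_ne_zero_of_mul h
  constructor
  · -- first recurrence
    have key : ∀ n : ℕ,
        x ^ 2 / (x + y) ^ 2 * ((-1 : ℝ) ^ n * (poch (x + 1) n) ^ 2 / (poch (x + 1 + y) n) ^ 2)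
          = - t (n+1) := by
      intro n
      have e1 : poch x (n+1) = x * poch (x+1) n := poch_succ' x n
      have e2 : poch (x+y) (n+1) = (x+y) * poch (x+y+1) n := poch_succ' _ n
      have e3 : x + 1 + y = x + y + 1 := by ring
      simp only [ht, e1, e2, e3]
      field_simp
      ring
    have hsum2 : x ^ 2 / (x + y) ^ 2 * s (x+1) y = - ∑' n : ℕ, t (n+1) := by
      rw [s, ← tsum_mul_left, ← tsum_neg]
      exact tsum_congr key
    have hshift : s x y = t 0 + ∑' n : ℕ, t (n+1) := by
      rw [s]
      exact Summable.tsum_eq_zero_add h1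
    have ht0 : t 0 = 1 := by simp [ht, poch_zero']
    rw [hshift, hsum2, ht0]
    ring
  · -- second recurrence
    set pp : ℕ → ℝ := fun n =>
      (n:ℝ)^2/2 + (x + 3*y/2)*(n:ℝ) + (x^2/2 + 3*x*y/2 + 5*y^2/4 + y/4) with hpp
    set w : ℕ → ℝ := fun n => (-1 : ℝ) ^ n * (poch x n) ^ 2 / (poch (x + y) (n+2)) ^ 2 with hw
    set u : ℕ → ℝ := fun n =>
      (-1 : ℝ) ^ n * (poch x n) ^ 2 * pp n / (poch (x + y) (n+1)) ^ 2 with hu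
    set c : ℝ := y * (y+1)^3 / 4 with hc
    have hm : ∀ n : ℕ, x + y + (n:ℝ) ≠ 0 := fun n => hxy n
    have hm' : ∀ n : ℕ, x + y + (n:ℝ) + 1 ≠ 0 := by
      intro n
      have := hxy (n+1); push_cast at this
      intro h; apply this; linarith
    -- telescoping identity
    have key : ∀ n : ℕ, t n + c * w n = u n - u (n+1) := by
      intro n
      have e1 : poch x (n+1) = poch x n * (x + n) := poch_succ x n
      have e2 : poch (x+y) (n+1) = poch (x+y) n * (x+y+n) := poch_succ _ n
      have e3 : poch (x+y) (n+2) = poch (x+y) n * (x+y+n) * (x+y+n+1) := by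
        rw [poch_succ, poch_succ]
        push_cast
        ring
      have hppn1 : pp (n+1) = ((n:ℝ)+1)^2/2 + (x + 3*y/2)*((n:ℝ)+1)
          + (x^2/2 + 3*x*y/2 + 5*y^2/4 + y/4) := by
        simp only [hpp]; push_cast; ring
      simp only [ht, hw, hu, hc, e1, e2, e3, hppn1, pow_succ]
      have h4 := hP n
      have h5 := hm n
      have h6 := hm' n
      field_simp
      ring
    -- w is (a constant multiple of) the term of `s x (y+2)`
    have key2 : ∀ n : ℕ, w n =
        ((-1 : ℝ) ^ n * (poch x n) ^ 2 / (poch (x + (y + 2)) n) ^ 2)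
          / ((x+y)^2 * (x+y+1)^2) := by
      intro n
      have e : poch (x+y) (n+2) = (x+y) * ((x+y+1) * poch (x+y+2) n) := by
        rw [poch_succ', poch_succ', show x+y+1+1 = x+y+2 from by ring]
      have e2 : x + (y+2) = x + y + 2 := by ring
      have hne : poch (x+y+2) n ≠ 0 := by
        have h := hP (n+2)
        rw [e] at h
        exact right_ne_zero_of_mul (right_ne_zero_of_mul h)
      simp only [hw, e, e2]
      rw [div_div]
      congr 1
      ring
    have hwsum : Summable w := by
      have := (h3.div_const ((x+y)^2 * (x+y+1)^2))
      apply this.congr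
      intro n
      exact (key2 n).symm
    have hfsum : Summable (fun n => t n + c * w n) := h1.add (hwsum.mul_left c)
    -- u tends to 0
    have hufact : ∀ n : ℕ, u n = t n * (1/2 + (y/2) * (x+y+(n:ℝ))⁻¹
        + ((y^2+y)/4) * ((x+y+(n:ℝ))⁻¹)^2) := by
      intro n
      have e2 : poch (x+y) (n+1) = poch (x+y) n * (x+y+n) := poch_succ _ n
      simp only [hu, ht, hpp, e2]
      have h4 := hP n
      have h5 := hm n
      field_simp
      ring
    have hminf : Filter.Tendsto (fun n : ℕ => x + y + (n:ℝ)) Filter.atTop Filter.atTop :=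
      Filter.tendsto_atTop_add_const_left _ _ tendsto_natCast_atTop_atTop
    have hinv : Filter.Tendsto (fun n : ℕ => (x + y + (n:ℝ))⁻¹) Filter.atTop (nhds 0) :=
      hminf.inv_tendsto_atTop
    have ht0 : Filter.Tendsto t Filter.atTop (nhds 0) := h1.tendsto_atTop_zero
    have hu0 : Filter.Tendsto u Filter.atTop (nhds 0) := by
      have hg : Filter.Tendsto (fun n : ℕ => 1/2 + (y/2) * (x+y+(n:ℝ))⁻¹
          + ((y^2+y)/4) * ((x+y+(n:ℝ))⁻¹)^2) Filter.atTop
          (nhds (1/2 + (y/2) * 0 + ((y^2+y)/4) * 0^2)) := by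
        exact (tendsto_const_nhds.add (tendsto_const_nhds.mul hinv)).add
          (tendsto_const_nhds.mul (hinv.pow 2))
      have := ht0.mul hg
      rw [zero_mul] at this
      exact Filter.Tendsto.congr (fun n => (hufact n).symm) this
    -- sum of the telescoping series
    have hpartial : ∀ N : ℕ, ∑ n ∈ Finset.range N, (t n + c * w n) = u 0 - u N := by
      intro N
      rw [Finset.sum_congr rfl (fun n _ => key n)]
      exact Finset.sum_range_sub' u N
    have htends : Filter.Tendsto (fun N => ∑ n ∈ Finset.range N, (t n + c * w n))
        Filter.atTop (nhds (u 0)) := by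
      have h' : Filter.Tendsto (fun N => u 0 - u N) Filter.atTop (nhds (u 0 - 0)) :=
        tendsto_const_nhds.sub hu0
      rw [sub_zero] at h'
      exact h'.congr (fun N => (hpartial N).symm)
    have hteq : (∑' n, (t n + c * w n)) = u 0 :=
      tendsto_nhds_unique hfsum.hasSum.tendsto_sum_nat htends
    have hsplit : (∑' n, (t n + c * w n)) = s x y + c * ∑' n, w n := by
      rw [Summable.tsum_add h1 (hwsum.mul_left c), tsum_mul_left]
      rfl
    have hwval : (∑' n, w n) = s x (y+2) / ((x+y)^2 * (x+y+1)^2) := by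
      rw [tsum_congr key2, tsum_div_const]
      rfl
    have hu0val : u 0 = (2*x^2 + 6*x*y + 5*y^2 + y) / (4 * (x+y)^2) := by
      simp only [hu, hpp, poch_zero']
      rw [show poch (x+y) 1 = x + y by simp [poch]]
      push_cast
      field_simp
      ring
    have main : s x y + c * (s x (y+2) / ((x+y)^2 * (x+y+1)^2))
        = (2*x^2 + 6*x*y + 5*y^2 + y) / (4 * (x+y)^2) := by
      rw [← hwval, ← hsplit, hteq, hu0val]
    rw [hc] at main
    field_simp at main ⊢
    linarith [main]
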